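/- Under the assumption -log(1-P_e) ≤ H(Y|Z_X) and Z_X = f(X) deterministic, the Bayes error rate satisfies P_e ≤ 1 - exp(-(H(Y) - I(Z_X;X) + I(Z_X;X|Y))). -/
import Mathlib


open Finset Real

noncomputable section

/-- Probability that a random variable `X` on a finite sample space with weights `μ`
takes the value `x`. -/
def prob {Ω : Type*} [Fintype Ω] (μ : Ω → ℝ) {α : Type*} [Fintype α] [DecidableEq α]
    (X : Ω → α) (x : α) : ℝ :=
  ∑ ω, if X ω = x then μ ω else 0

/-- Shannon entropy (natural log) of a discrete random variable. -/
def entropy {Ω : Type*} [Fintype Ω] (μ : Ω → ℝ) {α : Type*} [Fintype α] [DecidableEq α]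
    (X : Ω → α) : ℝ :=
  -∑ x, prob μ X x * Real.log (prob μ X x)

/-- Conditional Shannon entropy `H(X | Z)`. -/
def condEntropy {Ω : Type*} [Fintype Ω] (μ : Ω → ℝ) {α β : Type*}
    [Fintype α] [DecidableEq α] [Fintype β] [DecidableEq β]
    (X : Ω → α) (Z : Ω → β) : ℝ :=
  -∑ x, ∑ z, prob μ (fun ω => (X ω, Z ω)) (x, z) *
      Real.log (prob μ (fun ω => (X ω, Z ω)) (x, z) / prob μ Z z)

/-- Mutual information `I(X ; Y)`. -/
def mutualInfo {Ω : Type*} [Fintype Ω] (μ : Ω → ℝ) {α β : Type*}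
    [Fintype α] [DecidableEq α] [Fintype β] [DecidableEq β]
    (X : Ω → α) (Y : Ω → β) : ℝ :=
  ∑ x, ∑ y, prob μ (fun ω => (X ω, Y ω)) (x, y) *
      Real.log (prob μ (fun ω => (X ω, Y ω)) (x, y) / (prob μ X x * prob μ Y y))

/-- Conditional mutual information `I(X ; Y | Z)`. -/
def condMutualInfo {Ω : Type*} [Fintype Ω] (μ : Ω → ℝ) {α β γ : Type*}
    [Fintype α] [DecidableEq α] [Fintype β] [DecidableEq β] [Fintype γ] [DecidableEq γ]
    (X : Ω → α) (Y : Ω → β) (Z : Ω → γ) : ℝ :=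
  ∑ x, ∑ y, ∑ z, prob μ (fun ω => (X ω, Y ω, Z ω)) (x, y, z) *
      Real.log (prob μ Z z * prob μ (fun ω => (X ω, Y ω, Z ω)) (x, y, z) /
        (prob μ (fun ω => (X ω, Z ω)) (x, z) * prob μ (fun ω => (Y ω, Z ω)) (y, z)))

/-- Bayes error rate of predicting `Y` from `X`:
`P_e = E[1 - max_y P(Y = y | X)] = 1 - ∑_x max_y P(Y = y, X = x)`. -/
def bayesError {Ω : Type*} [Fintype Ω] (μ : Ω → ℝ) {α β : Type*}
    [Fintype α] [DecidableEq α] [Fintype β] [DecidableEq β] [Nonempty β]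
    (X : Ω → α) (Y : Ω → β) : ℝ :=
  1 - ∑ x, (Finset.univ.sup' Finset.univ_nonempty
      fun y => prob μ (fun ω => (Y ω, X ω)) (y, x))

lemma sum_prob_mul {Ω β : Type*} [Fintype Ω] [Fintype β] [DecidableEq β]
    (μ : Ω → ℝ) (g : Ω → β) (L : β → ℝ) :
    ∑ v, prob μ g v * L v = ∑ ω, μ ω * L (g ω) := by
  unfold prob
  simp_rw [Finset.sum_mul]
  rw [Finset.sum_comm]
  refine Finset.sum_congr rfl fun ω _ => ?_
  simp [ite_mul]

lemma prob_pos {Ω β : Type*} [Fintype Ω] [Fintype β] [DecidableEq β]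
    (μ : Ω → ℝ) (hμ : ∀ ω, 0 ≤ μ ω) (g : Ω → β) {ω₀ : Ω} (h : 0 < μ ω₀) :
    0 < prob μ g (g ω₀) := by
  unfold prob
  refine Finset.sum_pos' (fun ω _ => by by_cases hh : g ω = g ω₀ <;> simp [hh, hμ ω]) ⟨ω₀, Finset.mem_univ _, by simp [h]⟩

lemma prob_congr {Ω α β : Type*} [Fintype Ω] [Fintype α] [DecidableEq α]
    [Fintype β] [DecidableEq β]
    (μ : Ω → ℝ) (g : Ω → α) (h : Ω → β) (a : α) (b : β)
    (H : ∀ ω, g ω = a ↔ h ω = b) :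
    prob μ g a = prob μ h b := by
  unfold prob
  refine Finset.sum_congr rfl fun ω _ => ?_
  simp [H ω]

lemma info_identity {Ω : Type*} [Fintype Ω] (μ : Ω → ℝ) (hμ : ∀ ω, 0 ≤ μ ω)
    {α β γ : Type*} [Fintype α] [DecidableEq α] [Fintype β] [DecidableEq β]
    [Fintype γ] [DecidableEq γ]
    (X : Ω → α) (Y : Ω → β) (f : α → γ) :
    condEntropy μ Y (fun ω => f (X ω)) =
      entropy μ Y - mutualInfo μ (fun ω => f (X ω)) X +
        condMutualInfo μ (fun ω => f (X ω)) X Y := by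
  set Z : Ω → γ := fun ω => f (X ω) with hZ
  have hCE : condEntropy μ Y Z =
      -∑ ω, μ ω * Real.log (prob μ (fun ω' => (Y ω', Z ω')) (Y ω, Z ω) / prob μ Z (Z ω)) := by
    rw [condEntropy, ← sum_prob_mul μ (fun ω => (Y ω, Z ω))
      (fun p => Real.log (prob μ (fun ω => (Y ω, Z ω)) p / prob μ Z p.2)),
      Fintype.sum_prod_type]
  have hH : entropy μ Y = -∑ ω, μ ω * Real.log (prob μ Y (Y ω)) := by
    rw [entropy, sum_prob_mul μ Y (fun v => Real.log (prob μ Y v))]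
  have hMI : mutualInfo μ Z X =
      ∑ ω, μ ω * Real.log (prob μ (fun ω' => (Z ω', X ω')) (Z ω, X ω) /
        (prob μ Z (Z ω) * prob μ X (X ω))) := by
    rw [mutualInfo, ← sum_prob_mul μ (fun ω => (Z ω, X ω))
      (fun p => Real.log (prob μ (fun ω => (Z ω, X ω)) p / (prob μ Z p.1 * prob μ X p.2))),
      Fintype.sum_prod_type]
  have hCMI : condMutualInfo μ Z X Y =
      ∑ ω, μ ω * Real.log (prob μ Y (Y ω) *
        prob μ (fun ω' => (Z ω', X ω', Y ω')) (Z ω, X ω, Y ω) /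
        (prob μ (fun ω' => (Z ω', Y ω')) (Z ω, Y ω) *
         prob μ (fun ω' => (X ω', Y ω')) (X ω, Y ω))) := by
    rw [condMutualInfo, ← sum_prob_mul μ (fun ω => (Z ω, X ω, Y ω))
      (fun p => Real.log (prob μ Y p.2.2 * prob μ (fun ω => (Z ω, X ω, Y ω)) p /
        (prob μ (fun ω => (Z ω, Y ω)) (p.1, p.2.2) *
         prob μ (fun ω => (X ω, Y ω)) (p.2.1, p.2.2)))),
      Fintype.sum_prod_type]
    refine Finset.sum_congr rfl fun x _ => ?_
    rw [Fintype.sum_prod_type]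
  rw [hCE, hH, hMI, hCMI, ← Finset.sum_neg_distrib, ← Finset.sum_neg_distrib,
    ← Finset.sum_sub_distrib, ← Finset.sum_add_distrib]
  refine Finset.sum_congr rfl fun ω _ => ?_
  rcases (hμ ω).eq_or_lt with h0 | h0
  · simp [← h0]
  -- positivity of all probs at this ω's values
  have pY := prob_pos μ hμ Y h0
  have pZ := prob_pos μ hμ Z h0
  have pX := prob_pos μ hμ X h0
  have pYZ := prob_pos μ hμ (fun ω' => (Y ω', Z ω')) h0
  have pZX := prob_pos μ hμ (fun ω' => (Z ω', X ω')) h0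
  have pZY := prob_pos μ hμ (fun ω' => (Z ω', Y ω')) h0
  have pXY := prob_pos μ hμ (fun ω' => (X ω', Y ω')) h0
  have pZXY := prob_pos μ hμ (fun ω' => (Z ω', X ω', Y ω')) h0
  -- key substitutions using Z = f ∘ X
  have eZX : prob μ (fun ω' => (Z ω', X ω')) (Z ω, X ω) = prob μ X (X ω) := by
    refine prob_congr μ _ _ _ _ fun ω' => ?_
    simp only [hZ, Prod.mk.injEq]
    constructor
    · rintro ⟨-, h⟩; exact h
    · rintro h; exact ⟨by rw [h], h⟩
  have eZXY : prob μ (fun ω' => (Z ω', X ω', Y ω')) (Z ω, X ω, Y ω) =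
      prob μ (fun ω' => (X ω', Y ω')) (X ω, Y ω) := by
    refine prob_congr μ _ _ _ _ fun ω' => ?_
    simp only [hZ, Prod.mk.injEq]
    constructor
    · rintro ⟨-, h⟩; exact h
    · rintro ⟨h1, h2⟩; exact ⟨by rw [h1], h1, h2⟩
  have eZY : prob μ (fun ω' => (Z ω', Y ω')) (Z ω, Y ω) =
      prob μ (fun ω' => (Y ω', Z ω')) (Y ω, Z ω) := by
    refine prob_congr μ _ _ _ _ fun ω' => ?_
    simp only [Prod.mk.injEq]
    tauto
  rw [eZX, eZXY, eZY]
  rw [Real.log_div (by positivity) (by positivity),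
      Real.log_div (by positivity) (by positivity),
      Real.log_div (by positivity) (by positivity),
      Real.log_mul (by positivity) (by positivity),
      Real.log_mul (by positivity) (by positivity),
      Real.log_mul (by positivity) (by positivity)]
  ring

theorem bayesError_upper_bound_pretraining
    {Ω : Type*} [Fintype Ω] (μ : Ω → ℝ) (hμ : ∀ ω, 0 ≤ μ ω) (hsum : ∑ ω, μ ω = 1)
    {α γ : Type*} [Fintype α] [DecidableEq α] [Fintype γ] [DecidableEq γ]
    (X : Ω → α) (Y : Ω → Bool) (f : α → γ)
    (hPe : bayesError μ (fun ω => f (X ω)) Y < 1)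
    (hFM : -Real.log (1 - bayesError μ (fun ω => f (X ω)) Y) ≤
      condEntropy μ Y (fun ω => f (X ω))) :
    bayesError μ (fun ω => f (X ω)) Y ≤
      1 - Real.exp (-(entropy μ Y - mutualInfo μ (fun ω => f (X ω)) X +
        condMutualInfo μ (fun ω => f (X ω)) X Y)) := by
  have hpos : 0 < 1 - bayesError μ (fun ω => f (X ω)) Y := by linarith
  have hid := info_identity μ hμ X Y f
  have hE : -Real.log (1 - bayesError μ (fun ω => f (X ω)) Y) ≤
      entropy μ Y - mutualInfo μ (fun ω => f (X ω)) X +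
        condMutualInfo μ (fun ω => f (X ω)) X Y := by
    rw [← hid]; exact hFM
  have h2 : Real.exp (-(entropy μ Y - mutualInfo μ (fun ω => f (X ω)) X +
      condMutualInfo μ (fun ω => f (X ω)) X Y)) ≤
      1 - bayesError μ (fun ω => f (X ω)) Y := by
    calc Real.exp (-(entropy μ Y - mutualInfo μ (fun ω => f (X ω)) X +
        condMutualInfo μ (fun ω => f (X ω)) X Y))
        ≤ Real.exp (Real.log (1 - bayesError μ (fun ω => f (X ω)) Y)) := by
          apply Real.exp_le_exp.2; linarith
      _ = 1 - bayesError μ (fun ω => f (X ω)) Y := Real.exp_log hpos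
  linarith
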